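/- Let (w_i) be a non-decreasing positive sequence, and consider the fine-time urn process with parameter d. For all k₀ and k ≥ 0, |M_{k₀+k} − M_{k₀} − (N_{k₀+k} − N_{k₀})| ≤ 2d / w_{X_{k₀}}, where X_k = min(R̃_{⌊k⌋_d}, G̃_{⌊k⌋_d}). -/
import Mathlib

lemma urn_aux (d : ℕ) (hd : 1 ≤ d) (w : ℕ → ℝ) (hw : ∀ i, 0 < w i) (hmono : Monotone w)
    (A : ℕ → ℕ) (hA : ∀ ℓ, A (ℓ + 1) = A ℓ + 1 ∨ A (ℓ + 1) = A ℓ) (k₀ : ℕ) :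
    ∀ k : ℕ, ∑ ℓ ∈ Finset.Ico k₀ (k₀ + k),
        (if A (ℓ + 1) = A ℓ + 1 then 1 / w (A (d * (ℓ / d))) - 1 / w (A ℓ) else 0)
      ≤ (d : ℝ) / w (A (d * ((k₀ - 1) / d))) - (d : ℝ) / w (A (d * ((k₀ + k) / d)))
        + (((k₀ + k) % d : ℕ) : ℝ) * (1 / w (A (d * ((k₀ + k) / d))) - 1 / w (A (k₀ + k))) := by
  have hd0 : 0 < d := hd
  have hAmono : Monotone A := monotone_nat_of_le_succ fun n => by rcases hA n with h | h <;> omega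
  have hinv : ∀ a b : ℕ, a ≤ b → 1 / w b ≤ 1 / w a := fun a b h =>
    one_div_le_one_div_of_le (hw a) (hmono h)
  have hinvA : ∀ a b : ℕ, a ≤ b → 1 / w (A b) ≤ 1 / w (A a) := fun a b h =>
    hinv _ _ (hAmono h)
  have hinvpos : ∀ a : ℕ, (0:ℝ) < 1 / w a := fun a => one_div_pos.mpr (hw a)
  intro k
  induction k with
  | zero =>
    simp only [Nat.add_zero, Finset.Ico_self, Finset.sum_empty]
    have h1 : d * ((k₀ - 1) / d) ≤ d * (k₀ / d) :=
      Nat.mul_le_mul_left d (Nat.div_le_div_right (by omega))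
    have h2 : d * (k₀ / d) ≤ k₀ := by
      calc d * (k₀ / d) = (k₀ / d) * d := mul_comm _ _
        _ ≤ k₀ := Nat.div_mul_le_self _ _
    have h3 : (d:ℝ) / w (A (d * (k₀ / d))) ≤ (d:ℝ) / w (A (d * ((k₀ - 1) / d))) :=
      div_le_div_of_nonneg_left (by positivity) (hw _) (hmono (hAmono h1))
    have h4 : (0:ℝ) ≤ (((k₀ % d : ℕ)) : ℝ) *
        (1 / w (A (d * (k₀ / d))) - 1 / w (A k₀)) :=
      mul_nonneg (Nat.cast_nonneg _) (sub_nonneg.2 (hinvA _ _ h2))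
    linarith
  | succ k ih =>
    have hmk : k₀ + (k + 1) = (k₀ + k) + 1 := by omega
    rw [hmk, Finset.sum_Ico_succ_top (Nat.le_add_right k₀ k)]
    set m := k₀ + k with hmdef
    have hblkm : d * (m / d) ≤ m := by
      calc d * (m / d) = (m / d) * d := mul_comm _ _
        _ ≤ m := Nat.div_mul_le_self _ _
    have hum : 1 / w (A m) ≤ 1 / w (A (d * (m / d))) := hinvA _ _ hblkm
    by_cases hdvd : d ∣ (m + 1)
    · -- crossing a block boundary
      obtain ⟨c, hc⟩ := hdvd
      rcases c with _ | c'
      · omega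
      have hm' : m = d * c' + (d - 1) := by
        rw [Nat.mul_succ] at hc; omega
      have hmod : m % d = d - 1 := by
        rw [hm', Nat.mul_add_mod]; exact Nat.mod_eq_of_lt (by omega)
      have hdivm : m / d = c' := by
        rw [hm', Nat.mul_add_div hd0, Nat.div_eq_of_lt (by omega), Nat.add_zero]
      have hdiv1 : (m + 1) / d = c' + 1 := by
        rw [hc]; exact Nat.mul_div_cancel_left _ hd0
      have hmod1 : (m + 1) % d = 0 := by rw [hc]; exact Nat.mul_mod_right _ _
      rw [hmod1, hdiv1, ← hc, hdivm]
      rw [hdivm, hmod] at ih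
      have hcast : ((d - 1 : ℕ) : ℝ) = (d : ℝ) - 1 := by
        push_cast [hd]; ring
      rw [hcast] at ih
      have hgu : (d:ℝ) / w (A (d * c')) = (d:ℝ) * (1 / w (A (d * c'))) :=
        (mul_one_div _ _).symm
      have hgv' : (d:ℝ) / w (A (m + 1)) = (d:ℝ) * (1 / w (A (m + 1))) :=
        (mul_one_div _ _).symm
      have hum' : 1 / w (A m) ≤ 1 / w (A (d * c')) := hinvA _ _ (by omega)
      have hdr : (1:ℝ) ≤ (d:ℝ) := by exact_mod_cast hd
      rcases hA m with hred | hgreen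
      · have hvv' : 1 / w (A (m + 1)) ≤ 1 / w (A m) := hinvA _ _ (Nat.le_succ m)
        rw [if_pos hred]
        push_cast
        nlinarith [mul_nonneg (show (0:ℝ) ≤ (d:ℝ) by positivity)
          (sub_nonneg.2 hvv'), hgu, hgv', hum']
      · have hne : ¬ (A (m + 1) = A m + 1) := by omega
        rw [if_neg hne]
        have hv'v : 1 / w (A (m + 1)) = 1 / w (A m) := by rw [hgreen]
        push_cast
        nlinarith [hgu, hgv', hum', hv'v]
    · -- staying within the block
      have hdiveq : (m + 1) / d = m / d := by
        rw [Nat.succ_div, if_neg hdvd, Nat.add_zero]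
      have e1 := Nat.div_add_mod m d
      have e2 := Nat.div_add_mod (m + 1) d
      rw [hdiveq] at e2
      have hmodeq : (m + 1) % d = m % d + 1 := by omega
      rw [hdiveq, hmodeq]
      rcases hA m with hred | hgreen
      · have hvv' : 1 / w (A (m + 1)) ≤ 1 / w (A m) := hinvA _ _ (Nat.le_succ m)
        rw [if_pos hred]
        push_cast
        nlinarith [mul_nonneg (show (0:ℝ) ≤ ((m % d : ℕ):ℝ) + 1 by positivity)
          (sub_nonneg.2 hvv')]
      · have hne : ¬ (A (m + 1) = A m + 1) := by omega
        rw [if_neg hne]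
        have hv'v : 1 / w (A (m + 1)) = 1 / w (A m) := by rw [hgreen]
        push_cast
        nlinarith [sub_nonneg.2 hum]

lemma urn_aux2 (d : ℕ) (hd : 1 ≤ d) (w : ℕ → ℝ) (hw : ∀ i, 0 < w i) (hmono : Monotone w)
    (A : ℕ → ℕ) (hA : ∀ ℓ, A (ℓ + 1) = A ℓ + 1 ∨ A (ℓ + 1) = A ℓ) (k₀ k : ℕ) :
    ∑ ℓ ∈ Finset.Ico k₀ (k₀ + k),
        (if A (ℓ + 1) = A ℓ + 1 then 1 / w (A (d * (ℓ / d))) - 1 / w (A ℓ) else 0)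
      ≤ (d : ℝ) / w (A (d * ((k₀ - 1) / d))) := by
  have h := urn_aux d hd w hw hmono A hA k₀ k
  set m := k₀ + k with hm
  have hAmono : Monotone A := monotone_nat_of_le_succ fun n => by rcases hA n with h | h <;> omega
  have hu : (0:ℝ) < 1 / w (A (d * (m / d))) := one_div_pos.mpr (hw _)
  have hv : (0:ℝ) < 1 / w (A m) := one_div_pos.mpr (hw _)
  have hj : ((m % d : ℕ) : ℝ) ≤ (d:ℝ) := by
    exact_mod_cast (Nat.mod_lt m hd).le
  have hjnn : (0:ℝ) ≤ ((m % d : ℕ) : ℝ) := Nat.cast_nonneg _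
  have hdw : (d:ℝ) / w (A (d * (m / d))) = (d:ℝ) * (1 / w (A (d * (m / d)))) := by
    rw [mul_one_div]
  nlinarith [mul_nonneg (sub_nonneg.2 hj) hu.le, mul_nonneg hjnn hv.le]

lemma urn_nonneg (d : ℕ) (w : ℕ → ℝ) (hw : ∀ i, 0 < w i) (hmono : Monotone w)
    (A : ℕ → ℕ) (hA : ∀ ℓ, A (ℓ + 1) = A ℓ + 1 ∨ A (ℓ + 1) = A ℓ) (k₀ k : ℕ) :
    (0:ℝ) ≤ ∑ ℓ ∈ Finset.Ico k₀ (k₀ + k),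
        (if A (ℓ + 1) = A ℓ + 1 then 1 / w (A (d * (ℓ / d))) - 1 / w (A ℓ) else 0) := by
  have hAmono : Monotone A := monotone_nat_of_le_succ fun n => by rcases hA n with h | h <;> omega
  apply Finset.sum_nonneg
  intro ℓ _
  split
  · have hblk : d * (ℓ / d) ≤ ℓ := by
      calc d * (ℓ / d) = (ℓ / d) * d := mul_comm _ _
        _ ≤ ℓ := Nat.div_mul_le_self _ _
    have := one_div_le_one_div_of_le (hw (A (d * (ℓ / d)))) (hmono (hAmono hblk))
    linarith
  · exact le_refl 0

theorem stmt_17 (d : ℕ) (hd : 1 ≤ d)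
    (w : ℕ → ℝ) (hw : ∀ i, 0 < w i) (hmono : Monotone w)
    (R G : ℕ → ℕ) (hR0 : R 0 = 0) (hG0 : G 0 = 0)
    (hstep : ∀ ℓ, (R (ℓ + 1) = R ℓ + 1 ∧ G (ℓ + 1) = G ℓ) ∨
      (R (ℓ + 1) = R ℓ ∧ G (ℓ + 1) = G ℓ + 1))
    (N M : ℕ → ℝ)
    (hN : ∀ k, N k = ∑ ℓ ∈ Finset.range k,
      (if R (ℓ + 1) = R ℓ + 1 then 1 / w (R ℓ) else - (1 / w (G ℓ))))
    (hM : ∀ k, M k = ∑ ℓ ∈ Finset.range k,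
      (if R (ℓ + 1) = R ℓ + 1 then 1 / w (R (d * (ℓ / d))) else - (1 / w (G (d * (ℓ / d)))))) :
    ∀ k₀ k : ℕ,
      |(M (k₀ + k) - M k₀) - (N (k₀ + k) - N k₀)| ≤
        2 * d / w (min (R (d * ((k₀ - 1) / d))) (G (d * ((k₀ - 1) / d)))) := by
  intro k₀ k
  have hR1 : ∀ ℓ, R (ℓ + 1) = R ℓ + 1 ∨ R (ℓ + 1) = R ℓ := fun ℓ => by
    rcases hstep ℓ with ⟨h, _⟩ | ⟨h, _⟩
    · exact Or.inl h
    · exact Or.inr h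
  have hG1 : ∀ ℓ, G (ℓ + 1) = G ℓ + 1 ∨ G (ℓ + 1) = G ℓ := fun ℓ => by
    rcases hstep ℓ with ⟨_, h⟩ | ⟨_, h⟩
    · exact Or.inr h
    · exact Or.inl h
  set b₀ := d * ((k₀ - 1) / d) with hb₀
  set SR := ∑ ℓ ∈ Finset.Ico k₀ (k₀ + k),
      (if R (ℓ + 1) = R ℓ + 1 then 1 / w (R (d * (ℓ / d))) - 1 / w (R ℓ) else 0) with hSR
  set SG := ∑ ℓ ∈ Finset.Ico k₀ (k₀ + k),
      (if G (ℓ + 1) = G ℓ + 1 then 1 / w (G (d * (ℓ / d))) - 1 / w (G ℓ) else 0) with hSG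
  have hSRle : SR ≤ (d : ℝ) / w (R b₀) := urn_aux2 d hd w hw hmono R hR1 k₀ k
  have hSGle : SG ≤ (d : ℝ) / w (G b₀) := urn_aux2 d hd w hw hmono G hG1 k₀ k
  have hSRnn : (0:ℝ) ≤ SR := urn_nonneg d w hw hmono R hR1 k₀ k
  have hSGnn : (0:ℝ) ≤ SG := urn_nonneg d w hw hmono G hG1 k₀ k
  have hEq : (M (k₀ + k) - M k₀) - (N (k₀ + k) - N k₀) = SR - SG := by
    rw [hM, hM, hN, hN, ← Finset.sum_Ico_eq_sub _ (Nat.le_add_right k₀ k),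
      ← Finset.sum_Ico_eq_sub _ (Nat.le_add_right k₀ k), hSR, hSG,
      ← Finset.sum_sub_distrib, ← Finset.sum_sub_distrib]
    apply Finset.sum_congr rfl
    intro ℓ _
    rcases hstep ℓ with ⟨h1, h2⟩ | ⟨h1, h2⟩
    · have hGne : ¬ (G (ℓ + 1) = G ℓ + 1) := by omega
      rw [if_pos h1, if_pos h1, if_pos h1, if_neg hGne]
      ring
    · have hRne : ¬ (R (ℓ + 1) = R ℓ + 1) := by omega
      rw [if_neg hRne, if_neg hRne, if_neg hRne, if_pos h2]
      ring
  have hwmin : 0 < w (min (R b₀) (G b₀)) := hw _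
  have hBR : (d : ℝ) / w (R b₀) ≤ (d : ℝ) / w (min (R b₀) (G b₀)) :=
    div_le_div_of_nonneg_left (by positivity) hwmin (hmono (min_le_left _ _))
  have hBG : (d : ℝ) / w (G b₀) ≤ (d : ℝ) / w (min (R b₀) (G b₀)) :=
    div_le_div_of_nonneg_left (by positivity) hwmin (hmono (min_le_right _ _))
  have h2B : 2 * (d:ℝ) / w (min (R b₀) (G b₀)) =
      2 * ((d:ℝ) / w (min (R b₀) (G b₀))) := by ring
  have hBnn : (0:ℝ) ≤ (d:ℝ) / w (min (R b₀) (G b₀)) := by positivity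
  rw [hEq, h2B, abs_le]
  constructor <;> linarith
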